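/- For every t > 0, L > 0 and all x, y ∈ [0, L], one has ∫_0^L ∑_{k∈ℤ} | e^{-(θ - x - 2kL)²/(4t)} − e^{-(θ - y - 2kL)²/(4t)} | dθ ≤ 4·|x − y|. -/

import Mathlib

open Real MeasureTheory Set
open scoped ENNReal

lemma gauss_integrable (t : ℝ) (ht : 0 < t) :
    Integrable (fun u : ℝ => exp (-u^2/(4*t))) := by
  have h : ∀ u : ℝ, -u^2/(4*t) = -(1/(4*t))*u^2 := fun u => by ring
  simp_rw [h]
  exact integrable_exp_neg_mul_sq (by positivity)

lemma gauss_shift_bound (t x y : ℝ) (ht : 0 < t) (hxy : x ≤ y) :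
    ∫ u : ℝ, |exp (-(u - x)^2/(4*t)) - exp (-(u - y)^2/(4*t))| ≤ 2 * (y - x) := by
  set f : ℝ → ℝ := fun u => exp (-u^2/(4*t)) with hf
  have hfint : Integrable f := gauss_integrable t ht
  have hfx : Integrable (fun u => f (u - x)) := hfint.comp_sub_right x
  have hfy : Integrable (fun u => f (u - y)) := hfint.comp_sub_right y
  have hf0 : ∀ u, 0 ≤ f u := fun u => (exp_pos _).le
  have hf1 : ∀ u, f u ≤ 1 := by
    intro u
    have h1 : -u^2/(4*t) ≤ 0 :=
      div_nonpos_iff.mpr (Or.inr ⟨by nlinarith [sq_nonneg u], by linarith⟩)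
    calc exp (-u^2/(4*t)) ≤ exp 0 := exp_le_exp.mpr h1
      _ = 1 := exp_zero
  set m := (x + y) / 2 with hm
  have htrans : ∀ (a : ℝ) (s : Set ℝ),
      ∫ u in (· - a) ⁻¹' s, f (u - a) = ∫ u in s, f u :=
    fun a s => (measurePreserving_sub_right volume a).setIntegral_preimage_emb
      (MeasurableEquiv.subRight a).measurableEmbedding f s
  have hsmall : ∫ u in Ico (m - y) (m - x), f u ≤ y - x := by
    have hvol : volume (Ico (m - y) (m - x)) < ⊤ := by
      rw [Real.volume_Ico]; exact ENNReal.ofReal_lt_top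
    have hb := norm_setIntegral_le_of_norm_le_const (μ := volume)
      (s := Ico (m - y) (m - x)) (f := f) (C := 1) hvol
      (fun u _ => by rw [Real.norm_eq_abs, abs_of_nonneg (hf0 u)]; exact hf1 u)
    calc ∫ u in Ico (m - y) (m - x), f u ≤ ‖∫ u in Ico (m - y) (m - x), f u‖ :=
          le_abs_self _
      _ ≤ 1 * (volume (Ico (m - y) (m - x))).toReal := hb
      _ = y - x := by
          rw [one_mul, Real.volume_Ico, ENNReal.toReal_ofReal (by linarith)]
          ring
  have hsplitIio : ∫ u in Iio (m - x), f u
      = (∫ u in Iio (m - y), f u) + ∫ u in Ico (m - y) (m - x), f u := by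
    rw [← setIntegral_union ((Set.Iio_disjoint_Ici le_rfl).mono_right
        Set.Ico_subset_Ici_self) measurableSet_Ico
      hfint.integrableOn hfint.integrableOn,
      Iio_union_Ico_eq_Iio (by linarith)]
  have hsplitIci : ∫ u in Ici (m - y), f u
      = (∫ u in Ico (m - y) (m - x), f u) + ∫ u in Ici (m - x), f u := by
    rw [← setIntegral_union ((Set.Iio_disjoint_Ici le_rfl).mono_left
        Set.Ico_subset_Iio_self) measurableSet_Ici
      hfint.integrableOn hfint.integrableOn,
      Ico_union_Ici_eq_Ici (by linarith)]
  have hsign : ∀ u : ℝ, u ≤ m → f (u - y) ≤ f (u - x) := by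
    intro u hu
    apply exp_le_exp.mpr
    rw [div_le_div_iff_of_pos_right (by positivity : (0:ℝ) < 4*t)]
    nlinarith [mul_nonneg (sub_nonneg.mpr hxy) (by linarith : 0 ≤ x + y - 2*u)]
  have hsign' : ∀ u : ℝ, m ≤ u → f (u - x) ≤ f (u - y) := by
    intro u hu
    apply exp_le_exp.mpr
    rw [div_le_div_iff_of_pos_right (by positivity : (0:ℝ) < 4*t)]
    nlinarith [mul_nonneg (sub_nonneg.mpr hxy) (by linarith : 0 ≤ 2*u - x - y)]
  -- preimage identities
  have hpreIio : ∀ a : ℝ, (· - a) ⁻¹' Iio (m - a) = Iio m := by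
    intro a; ext u; simp [sub_lt_sub_iff_right]
  have hpreIci : ∀ a : ℝ, (· - a) ⁻¹' Ici (m - a) = Ici m := by
    intro a; ext u; simp [sub_le_sub_iff_right]
  have hIio : ∀ a : ℝ, ∫ u in Iio m, f (u - a) = ∫ u in Iio (m - a), f u := by
    intro a; rw [← htrans a (Iio (m - a)), hpreIio a]
  have hIci : ∀ a : ℝ, ∫ u in Ici m, f (u - a) = ∫ u in Ici (m - a), f u := by
    intro a; rw [← htrans a (Ici (m - a)), hpreIci a]
  -- now combine
  have habs : Integrable (fun u => |f (u - x) - f (u - y)|) := (hfx.sub hfy).abs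
  have hsplit : ∫ u : ℝ, |f (u - x) - f (u - y)|
      = (∫ u in Iio m, |f (u - x) - f (u - y)|)
        + ∫ u in Ici m, |f (u - x) - f (u - y)| := by
    rw [← integral_add_compl measurableSet_Iio habs, compl_Iio]
  have h1 : ∫ u in Iio m, |f (u - x) - f (u - y)| ≤ y - x := by
    rw [setIntegral_congr_fun measurableSet_Iio
      (fun u hu => abs_of_nonneg (sub_nonneg.mpr (hsign u (le_of_lt hu)))),
      integral_sub hfx.integrableOn hfy.integrableOn, hIio x, hIio y,
      hsplitIio]
    linarith [hsmall]
  have h2 : ∫ u in Ici m, |f (u - x) - f (u - y)| ≤ y - x := by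
    have e : EqOn (fun u => |f (u - x) - f (u - y)|)
        (fun u => f (u - y) - f (u - x)) (Ici m) := fun u hu => by
      simp only
      rw [abs_sub_comm]
      exact abs_of_nonneg (sub_nonneg.mpr (hsign' u hu))
    rw [setIntegral_congr_fun measurableSet_Ici e,
      integral_sub hfy.integrableOn hfx.integrableOn, hIci x, hIci y,
      hsplitIci]
    linarith [hsmall]
  have : ∫ u : ℝ, |exp (-(u - x)^2/(4*t)) - exp (-(u - y)^2/(4*t))|
      = ∫ u : ℝ, |f (u - x) - f (u - y)| := rfl
  rw [this, hsplit]; linarith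

lemma gauss_shift_bound' (t x y : ℝ) (ht : 0 < t) :
    ∫ u : ℝ, |exp (-(u - x)^2/(4*t)) - exp (-(u - y)^2/(4*t))| ≤ 2 * |x - y| := by
  rcases le_total x y with h | h
  · rw [abs_sub_comm, abs_of_nonneg (by linarith)]
    exact gauss_shift_bound t x y ht h
  · rw [abs_of_nonneg (by linarith)]
    calc ∫ u : ℝ, |exp (-(u - x)^2/(4*t)) - exp (-(u - y)^2/(4*t))|
        = ∫ u : ℝ, |exp (-(u - y)^2/(4*t)) - exp (-(u - x)^2/(4*t))| := by
          congr 1; funext u; rw [abs_sub_comm]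
      _ ≤ 2 * (x - y) := gauss_shift_bound t y x ht h


/-- For every `t > 0`, `L > 0` and all `x, y ∈ [0, L]`,
`∫_0^L ∑_{k∈ℤ} | e^{-(θ - x - 2kL)²/(4t)} − e^{-(θ - y - 2kL)²/(4t)} | dθ ≤ 4·|x − y|`. -/
theorem integral_tsum_abs_periodized_gaussian_diff_le (t L x y : ℝ) (ht : 0 < t) (hL : 0 < L)
    (hx : x ∈ Set.Icc 0 L) (hy : y ∈ Set.Icc 0 L) :
    (∫ θ in (0 : ℝ)..L,
        ∑' k : ℤ, |Real.exp (-(θ - x - 2 * (k : ℝ) * L) ^ 2 / (4 * t)) -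
          Real.exp (-(θ - y - 2 * (k : ℝ) * L) ^ 2 / (4 * t))|) ≤
      4 * |x - y| := by
  classical
  set g : ℝ → ℝ := fun u => |exp (-(u - x)^2/(4*t)) - exp (-(u - y)^2/(4*t))| with hgdef
  have hg0 : ∀ u, 0 ≤ g u := fun u => abs_nonneg _
  have hgint : Integrable g :=
    (((gauss_integrable t ht).comp_sub_right x).sub
      ((gauss_integrable t ht).comp_sub_right y)).abs
  have hgc : Continuous g := by
    apply Continuous.abs
    exact ((continuous_id.sub continuous_const).pow 2).neg.div_const _ |>.rexp.sub
      (((continuous_id.sub continuous_const).pow 2).neg.div_const _).rexp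
  set q : ℝ → ℝ≥0∞ := fun u => ENNReal.ofReal (g u) with hqdef
  have hqm : Measurable q := ENNReal.measurable_ofReal.comp hgc.measurable
  have hG : ∀ θ : ℝ, (∑' k : ℤ, |Real.exp (-(θ - x - 2 * (k : ℝ) * L) ^ 2 / (4 * t)) -
      Real.exp (-(θ - y - 2 * (k : ℝ) * L) ^ 2 / (4 * t))|)
      = ∑' k : ℤ, g (θ - 2 * (k : ℝ) * L) := by
    intro θ
    exact tsum_congr fun k => by rw [hgdef]; rw [sub_right_comm θ x, sub_right_comm θ y]
  rw [intervalIntegral.integral_of_le hL.le]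
  have hGfun : ∀ θ ∈ Set.Ioc (0:ℝ) L, (∑' k : ℤ,
      |Real.exp (-(θ - x - 2 * (k : ℝ) * L) ^ 2 / (4 * t)) -
      Real.exp (-(θ - y - 2 * (k : ℝ) * L) ^ 2 / (4 * t))|)
      = ∑' k : ℤ, g (θ - 2 * (k : ℝ) * L) := fun θ _ => hG θ
  rw [setIntegral_congr_fun measurableSet_Ioc hGfun]
  -- lintegral chain
  have hA : ∀ k : ℤ, MeasurableSet (Ioc (0 - 2*(k:ℝ)*L) (L - 2*(k:ℝ)*L)) :=
    fun k => measurableSet_Ioc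
  have hdisj : Pairwise (Function.onFun Disjoint
      (fun k : ℤ => Ioc (0 - 2*(k:ℝ)*L) (L - 2*(k:ℝ)*L))) := by
    intro j k hjk
    rw [Function.onFun]
    rw [Set.Ioc_disjoint_Ioc]
    rcases hjk.lt_or_gt with h | h
    · have h1 : (j:ℝ) + 1 ≤ (k:ℝ) := by exact_mod_cast h
      refine le_trans (min_le_right _ _) (le_trans ?_ (le_max_left _ _))
      nlinarith
    · have h1 : (k:ℝ) + 1 ≤ (j:ℝ) := by exact_mod_cast h
      refine le_trans (min_le_left _ _) (le_trans ?_ (le_max_right _ _))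
      nlinarith
  have hchain : ∫⁻ θ in Ioc (0:ℝ) L, ∑' k : ℤ, q (θ - 2*(k:ℝ)*L)
      ≤ ENNReal.ofReal (2 * |x - y|) := by
    calc ∫⁻ θ in Ioc (0:ℝ) L, ∑' k : ℤ, q (θ - 2*(k:ℝ)*L)
        = ∑' k : ℤ, ∫⁻ θ in Ioc (0:ℝ) L, q (θ - 2*(k:ℝ)*L) :=
          lintegral_tsum fun k =>
            (hqm.comp (measurable_id.sub_const _)).aemeasurable
      _ = ∑' k : ℤ, ∫⁻ u in Ioc (0 - 2*(k:ℝ)*L) (L - 2*(k:ℝ)*L), q u := by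
          refine tsum_congr fun k => ?_
          have := (measurePreserving_sub_right volume (2*(k:ℝ)*L)).setLIntegral_comp_emb
            (MeasurableEquiv.subRight (2*(k:ℝ)*L)).measurableEmbedding q (Ioc 0 L)
          rwa [Set.image_sub_const_Ioc] at this
      _ = ∫⁻ u in ⋃ k : ℤ, Ioc (0 - 2*(k:ℝ)*L) (L - 2*(k:ℝ)*L), q u :=
          (lintegral_iUnion hA hdisj q).symm
      _ ≤ ∫⁻ u, q u := setLIntegral_le_lintegral _ _
      _ = ENNReal.ofReal (∫ u, g u) :=
          (ofReal_integral_eq_lintegral_ofReal hgint (ae_of_all _ hg0)).symm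
      _ ≤ ENNReal.ofReal (2 * |x - y|) :=
          ENNReal.ofReal_le_ofReal (gauss_shift_bound' t x y ht)
  by_cases hint : IntegrableOn (fun θ => ∑' k : ℤ, g (θ - 2*(k:ℝ)*L)) (Ioc 0 L) volume
  · rw [integral_eq_lintegral_of_nonneg_ae
      (ae_of_all _ fun θ => tsum_nonneg fun k => hg0 _) hint.aestronglyMeasurable]
    apply ENNReal.toReal_le_of_le_ofReal (by positivity)
    have hpt : ∀ θ : ℝ, ENNReal.ofReal (∑' k : ℤ, g (θ - 2*(k:ℝ)*L))
        ≤ ∑' k : ℤ, q (θ - 2*(k:ℝ)*L) := by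
      intro θ
      by_cases hs : Summable (fun k : ℤ => g (θ - 2*(k:ℝ)*L))
      · rw [ENNReal.ofReal_tsum_of_nonneg (fun k => hg0 _) hs]
      · rw [tsum_eq_zero_of_not_summable hs]
        simp
    calc ∫⁻ θ in Ioc (0:ℝ) L, ENNReal.ofReal (∑' k : ℤ, g (θ - 2*(k:ℝ)*L))
        ≤ ∫⁻ θ in Ioc (0:ℝ) L, ∑' k : ℤ, q (θ - 2*(k:ℝ)*L) :=
          lintegral_mono fun θ => hpt θ
      _ ≤ ENNReal.ofReal (2 * |x - y|) := hchain
      _ ≤ ENNReal.ofReal (4 * |x - y|) := ENNReal.ofReal_le_ofReal (by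
          have := abs_nonneg (x - y); linarith)
  · rw [integral_undef hint]
    positivity
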